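/- For every real δ > 0 and every z with 0 ≤ z ≤ δ, the integral of ‖ξ‖² over the circular segment {ξ ∈ ℝ² : ‖ξ‖ ≤ δ, ξ₂ ≥ z} (with respect to Lebesgue measure) equals (δ⁴/2)·arccos(z/δ) − (z/6)·(δ² − z²)^{3/2} − (z³/2)·√(δ² − z²). -/

import Mathlib

open MeasureTheory Real

private lemma csm_sqrt_div (δ x : ℝ) (hδ : 0 < δ) (hx : 0 ≤ δ^2 - x^2) :
    Real.sqrt (1 - (x/δ)^2) = Real.sqrt (δ^2 - x^2) / δ := by
  rw [show (1 : ℝ) - (x/δ)^2 = (δ^2 - x^2)/δ^2 by field_simp, Real.sqrt_div hx,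
    Real.sqrt_sq hδ.le]

private lemma csm_outer (δ z : ℝ) (hδ : 0 < δ) (hz0 : 0 ≤ z) (hzδ : z ≤ δ) :
    ∫ y in z..δ, (2/3*(δ^2-y^2)*Real.sqrt (δ^2-y^2) + 2*y^2*Real.sqrt (δ^2-y^2))
    = (δ^4/2)*Real.arccos (z/δ) - (z/6)*((δ^2-z^2)*Real.sqrt (δ^2-z^2))
      - (z^3/2)*Real.sqrt (δ^2-z^2) := by
  set g : ℝ → ℝ := fun y => 2/3*(δ^2-y^2)*Real.sqrt (δ^2-y^2) + 2*y^2*Real.sqrt (δ^2-y^2)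
    with hg
  set f : ℝ → ℝ := fun y => -((δ^4/2)*Real.arccos (y/δ))
      + (y/6)*((δ^2-y^2)*Real.sqrt (δ^2-y^2)) + (y^3/2)*Real.sqrt (δ^2-y^2) with hf
  have hsqc : Continuous fun y : ℝ => Real.sqrt (δ^2 - y^2) :=
    Real.continuous_sqrt.comp (by fun_prop)
  have harcc : Continuous fun y : ℝ => Real.arccos (y/δ) :=
    Real.continuous_arccos.comp (continuous_id.div_const δ)
  have hpc : Continuous fun y : ℝ => δ^2 - y^2 := by fun_prop
  have hgc : Continuous g := by
    rw [hg]
    exact ((continuous_const.mul hpc).mul hsqc).add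
      ((continuous_const.mul (continuous_pow 2)).mul hsqc)
  have hfc : Continuous f := by
    rw [hf]
    exact ((continuous_const.mul harcc).neg.add
      ((continuous_id.div_const 6).mul (hpc.mul hsqc))).add
      (((continuous_pow 3).div_const 2).mul hsqc)
  have key : ∫ y in z..δ, g y = f δ - f z := by
    apply intervalIntegral.integral_eq_sub_of_hasDeriv_right_of_le hzδ hfc.continuousOn
      _ (hgc.intervalIntegrable _ _)
    intro x hx
    obtain ⟨hx1, hx2⟩ := hx
    have hx0 : 0 ≤ x := le_trans hz0 hx1.le
    have hs : 0 < δ^2 - x^2 := by nlinarith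
    set s := Real.sqrt (δ^2 - x^2) with hsdef
    have hs0 : 0 < s := Real.sqrt_pos.2 hs
    have hs2 : s^2 = δ^2 - x^2 := Real.sq_sqrt hs.le
    clear_value s
    have hδ4 : δ^4 = (s^2 + x^2)^2 := by rw [hs2]; ring
    have hxδ1 : x/δ ≠ -1 := by
      have : 0 ≤ x/δ := div_nonneg hx0 hδ.le
      linarith
    have hxδ2 : x/δ ≠ 1 := by
      have : x/δ < 1 := (div_lt_one hδ).2 hx2
      linarith
    have hd1 : HasDerivAt (fun y => Real.arccos (y/δ)) (-(1 / Real.sqrt (1-(x/δ)^2)) * (1/δ)) x := by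
      have h0 : HasDerivAt (fun y : ℝ => y/δ) (1/δ) x := by
        simpa using (hasDerivAt_id x).div_const δ
      exact HasDerivAt.comp (h₂ := Real.arccos) (h := fun y : ℝ => y/δ) x (Real.hasDerivAt_arccos hxδ1 hxδ2) h0
    have hpoly : HasDerivAt (fun y : ℝ => δ^2 - y^2) (-(2*x)) x := by
      simpa using (hasDerivAt_pow 2 x).const_sub (δ^2)
    have hd2 : HasDerivAt (fun y => Real.sqrt (δ^2 - y^2)) (-(2*x) / (2*s)) x := by
      have := hpoly.sqrt (f := fun y : ℝ => δ^2 - y^2) (by nlinarith)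
      simpa [← hsdef] using this
    have hA : HasDerivAt (fun y => -((δ^4/2)*Real.arccos (y/δ)))
        (-((δ^4/2) * (-(1 / Real.sqrt (1-(x/δ)^2)) * (1/δ)))) x := (hd1.const_mul (δ^4/2)).neg
    have hC : HasDerivAt (fun y => (δ^2-y^2)*Real.sqrt (δ^2-y^2))
        (-(2*x)*s + (δ^2-x^2)*(-(2*x)/(2*s))) x := by
      have := hpoly.mul hd2
      rwa [← hsdef] at this
    have hB : HasDerivAt (fun y => (y/6)*((δ^2-y^2)*Real.sqrt (δ^2-y^2)))
        ((1/6)*((δ^2-x^2)*s) + (x/6)*(-(2*x)*s + (δ^2-x^2)*(-(2*x)/(2*s)))) x := by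
      have h0 : HasDerivAt (fun y : ℝ => y/6) (1/6) x := by
        simpa using (hasDerivAt_id x).div_const 6
      have := h0.mul hC
      rwa [← hsdef] at this
    have hD : HasDerivAt (fun y => (y^3/2)*Real.sqrt (δ^2-y^2))
        ((3*x^2/2)*s + (x^3/2)*(-(2*x)/(2*s))) x := by
      have h0 : HasDerivAt (fun y : ℝ => y^3/2) (3*x^2/2) x := by
        simpa using (hasDerivAt_pow 3 x).div_const 2
      have := h0.mul hd2
      rwa [← hsdef] at this
    have H := (hA.add hB).add hD
    have hgx : g x = 2/3*s^2*s + 2*x^2*s := by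
      rw [hg]; simp only; rw [← hsdef, ← hs2]
    have heq : -((δ^4/2) * (-(1 / Real.sqrt (1-(x/δ)^2)) * (1/δ)))
        + ((1/6)*((δ^2-x^2)*s) + (x/6)*(-(2*x)*s + (δ^2-x^2)*(-(2*x)/(2*s))))
        + ((3*x^2/2)*s + (x^3/2)*(-(2*x)/(2*s))) = g x := by
      rw [hgx, csm_sqrt_div δ x hδ hs.le, ← hsdef, ← hs2, hδ4]
      field_simp
      ring
    rw [heq] at H
    exact H.hasDerivWithinAt
  rw [key]
  simp only [hf]
  rw [div_self hδ.ne', Real.arccos_one, sub_self, Real.sqrt_zero]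
  ring

private lemma csm_inner (δ z y : ℝ) (hδ : 0 < δ) (hz0 : 0 ≤ z) :
    (∫ x : ℝ, ({p : ℝ × ℝ | p.2^2 + p.1^2 ≤ δ^2 ∧ z ≤ p.1}.indicator
        (fun p => p.2^2 + p.1^2) (y, x)))
    = (Set.Icc z δ).indicator
        (fun y => 2/3*(δ^2-y^2)*Real.sqrt (δ^2-y^2) + 2*y^2*Real.sqrt (δ^2-y^2)) y := by
  by_cases hy : z ≤ y ∧ y ≤ δ
  · obtain ⟨hy1, hy2⟩ := hy
    have hy0 : 0 ≤ y := le_trans hz0 hy1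
    have hsnn : 0 ≤ δ^2 - y^2 := by nlinarith
    set s := Real.sqrt (δ^2-y^2) with hsdef
    have hs2 : s^2 = δ^2 - y^2 := Real.sq_sqrt hsnn
    have hs0 : 0 ≤ s := Real.sqrt_nonneg _
    have hset : (fun x : ℝ => ({p : ℝ × ℝ | p.2^2 + p.1^2 ≤ δ^2 ∧ z ≤ p.1}.indicator
        (fun p => p.2^2 + p.1^2) (y, x)))
        = (Set.Icc (-s) s).indicator (fun x => x^2 + y^2) := by
      funext x
      by_cases hx : x ∈ Set.Icc (-s) s
      · have hmem : (y, x) ∈ {p : ℝ × ℝ | p.2^2 + p.1^2 ≤ δ^2 ∧ z ≤ p.1} := by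
          refine ⟨?_, hy1⟩
          have hxs : x^2 ≤ s^2 := sq_le_sq' hx.1 hx.2
          simp only
          nlinarith
        rw [Set.indicator_of_mem hmem, Set.indicator_of_mem hx]
      · have hnmem : (y, x) ∉ {p : ℝ × ℝ | p.2^2 + p.1^2 ≤ δ^2 ∧ z ≤ p.1} := by
          intro hmem
          obtain ⟨h1, _⟩ := hmem
          apply hx
          simp only at h1
          have hxs : x^2 ≤ s^2 := by nlinarith
          exact Set.mem_Icc.2 (by constructor <;> nlinarith [sq_nonneg (x-s), sq_nonneg (x+s)])
        rw [Set.indicator_of_notMem hnmem, Set.indicator_of_notMem hx]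
    rw [hset, MeasureTheory.integral_indicator measurableSet_Icc,
      MeasureTheory.integral_Icc_eq_integral_Ioc,
      ← intervalIntegral.integral_of_le (by linarith : -s ≤ s),
      Set.indicator_of_mem (Set.mem_Icc.2 ⟨hy1, hy2⟩)]
    rw [intervalIntegral.integral_add ((continuous_pow 2).intervalIntegrable _ _)
      (intervalIntegrable_const)]
    rw [integral_pow, intervalIntegral.integral_const, smul_eq_mul]
    rw [← hsdef, ← hs2]
    ring
  · rw [Set.indicator_of_notMem (by simpa [Set.mem_Icc] using hy)]
    have hzero : (fun x : ℝ => ({p : ℝ × ℝ | p.2^2 + p.1^2 ≤ δ^2 ∧ z ≤ p.1}.indicator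
        (fun p => p.2^2 + p.1^2) (y, x))) = fun _ => (0:ℝ) := by
      funext x
      apply Set.indicator_of_notMem
      intro hmem
      obtain ⟨h1, h2⟩ := hmem
      simp only at h1 h2
      apply hy
      refine ⟨h2, ?_⟩
      nlinarith [sq_nonneg x]
    rw [hzero, integral_zero]

theorem circular_segment_second_moment (δ z : ℝ) (hδ : 0 < δ) (hz0 : 0 ≤ z) (hzδ : z ≤ δ) :
    (∫ ξ in {ξ : EuclideanSpace ℝ (Fin 2) | ‖ξ‖ ≤ δ ∧ z ≤ ξ 1}, ‖ξ‖ ^ 2)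
      = (δ ^ 4 / 2) * Real.arccos (z / δ)
        - (z / 6) * (δ ^ 2 - z ^ 2) ^ ((3 : ℝ) / 2)
        - (z ^ 3 / 2) * Real.sqrt (δ ^ 2 - z ^ 2) := by
  have hsub : (0:ℝ) ≤ δ^2 - z^2 := by nlinarith
  have hrpow : (δ^2 - z^2) ^ ((3:ℝ)/2) = (δ^2 - z^2) * Real.sqrt (δ^2 - z^2) := by
    have h1 : (δ^2 - z^2) ^ ((3:ℝ)/2) = (Real.sqrt (δ^2 - z^2))^(3:ℕ) := by
      rw [Real.sqrt_eq_rpow, ← Real.rpow_natCast ((δ^2-z^2) ^ ((1:ℝ)/2)) 3,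
        ← Real.rpow_mul hsub]
      norm_num
    rw [h1, pow_succ, pow_two, Real.mul_self_sqrt hsub]
  set S : Set (ℝ × ℝ) := {p | p.2^2 + p.1^2 ≤ δ^2 ∧ z ≤ p.1} with hS
  set A : Set (EuclideanSpace ℝ (Fin 2)) := {ξ | ‖ξ‖ ≤ δ ∧ z ≤ ξ 1} with hA
  have hSclosed : IsClosed S := by
    have : S = {p : ℝ × ℝ | p.2^2 + p.1^2 ≤ δ^2} ∩ {p : ℝ × ℝ | z ≤ p.1} := rfl
    rw [this]
    exact (isClosed_le (by fun_prop) continuous_const).inter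
      (isClosed_le continuous_const continuous_fst)
  have hSmeas : MeasurableSet S := hSclosed.measurableSet
  have hScompact : IsCompact S := by
    apply Metric.isCompact_of_isClosed_isBounded hSclosed
    apply (Metric.isBounded_closedBall (x := (0:ℝ×ℝ)) (r := δ)).subset
    intro p hp
    obtain ⟨h1, _⟩ := hp
    simp only [Metric.mem_closedBall, dist_zero_right, Prod.norm_def, Real.norm_eq_abs]
    apply max_le
    · apply abs_le.2; constructor <;> nlinarith [sq_nonneg p.2]
    · apply abs_le.2; constructor <;> nlinarith [sq_nonneg p.1]
  have hInt : IntegrableOn (fun p : ℝ × ℝ => p.2^2 + p.1^2) S volume :=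
    (Continuous.continuousOn (by fun_prop)).integrableOn_compact hScompact
  have hIndInt : Integrable (S.indicator fun p : ℝ × ℝ => p.2^2 + p.1^2) volume :=
    hInt.integrable_indicator hSmeas
  have hAmeas : MeasurableSet A := by
    apply IsClosed.measurableSet
    apply IsClosed.inter
    · exact isClosed_le continuous_norm continuous_const
    · exact isClosed_le continuous_const (show Continuous fun ξ : EuclideanSpace ℝ (Fin 2) => ξ 1 by fun_prop)
  -- Step 1: set integral to indicator integral
  rw [← MeasureTheory.integral_indicator hAmeas]
  -- Step 2: transfer to ℝ × ℝ
  let e : EuclideanSpace ℝ (Fin 2) ≃ᵐ ℝ × ℝ :=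
    (MeasurableEquiv.toLp 2 (Fin 2 → ℝ)).symm.trans
      ((MeasurableEquiv.piFinTwo (fun _ => ℝ)).trans
        (MeasurableEquiv.prodComm : ℝ × ℝ ≃ᵐ ℝ × ℝ))
  have hswap : MeasurePreserving (⇑(MeasurableEquiv.prodComm : ℝ × ℝ ≃ᵐ ℝ × ℝ))
      (volume : Measure (ℝ × ℝ)) (volume : Measure (ℝ × ℝ)) :=
    Measure.measurePreserving_swap
  have hmp : MeasurePreserving (⇑e) volume volume :=
    ((EuclideanSpace.volume_preserving_symm_measurableEquiv_toLp (Fin 2)).trans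
      ((volume_preserving_piFinTwo (fun _ => ℝ)).trans hswap))
  have h2 : (∫ ξ, A.indicator (fun ξ => ‖ξ‖^2) ξ)
      = ∫ p : ℝ × ℝ, S.indicator (fun p => p.2^2 + p.1^2) p := by
    rw [← hmp.integral_comp e.measurableEmbedding (S.indicator fun p => p.2^2 + p.1^2)]
    congr 1
    funext ξ
    have hE : e ξ = (ξ 1, ξ 0) := rfl
    have hnorm2 : ‖ξ‖^2 = (ξ 0)^2 + (ξ 1)^2 := by
      rw [EuclideanSpace.norm_eq, Real.sq_sqrt (by positivity), Fin.sum_univ_two,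
        Real.norm_eq_abs, Real.norm_eq_abs, sq_abs, sq_abs]
    have hn : ‖ξ‖ = Real.sqrt ((ξ 0)^2 + (ξ 1)^2) := by
      rw [EuclideanSpace.norm_eq, Fin.sum_univ_two, Real.norm_eq_abs, Real.norm_eq_abs,
        sq_abs, sq_abs]
    have hmemiff : ξ ∈ A ↔ (ξ 1, ξ 0) ∈ S := by
      rw [hA, hS]
      simp only [Set.mem_setOf_eq, hn, Real.sqrt_le_left hδ.le]
    by_cases hmem : ξ ∈ A
    · rw [Set.indicator_of_mem hmem, hE, Set.indicator_of_mem (hmemiff.1 hmem), hnorm2]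
    · rw [Set.indicator_of_notMem hmem, hE,
        Set.indicator_of_notMem (fun h => hmem (hmemiff.2 h))]
  rw [h2]
  -- Step 3: Fubini
  rw [show (∫ p : ℝ × ℝ, S.indicator (fun p => p.2^2 + p.1^2) p)
      = ∫ y : ℝ, ∫ x : ℝ, S.indicator (fun p : ℝ × ℝ => p.2^2 + p.1^2) (y, x) from
    MeasureTheory.integral_prod _ hIndInt]
  -- Step 4: inner integral
  have h4 : (∫ y : ℝ, ∫ x : ℝ, S.indicator (fun p : ℝ × ℝ => p.2^2 + p.1^2) (y, x))
      = ∫ y : ℝ, (Set.Icc z δ).indicator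
        (fun y => 2/3*(δ^2-y^2)*Real.sqrt (δ^2-y^2) + 2*y^2*Real.sqrt (δ^2-y^2)) y := by
    congr 1
    funext y
    exact csm_inner δ z y hδ hz0
  rw [h4, MeasureTheory.integral_indicator measurableSet_Icc,
    MeasureTheory.integral_Icc_eq_integral_Ioc,
    ← intervalIntegral.integral_of_le hzδ, csm_outer δ z hδ hz0 hzδ, hrpow]
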